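/- The matrices W_a and W_0 are scaled inverses of each other: W_a · W_0 = W_0 · W_a = (m_1 · m_2 · ⋯ · m_n) · I, where I is the identity matrix indexed by genotypes. -/
import Mathlib


def wronOmega {m : ℕ} [NeZero m] (x y : Fin m) : ℤ :=
  if x ≠ 0 ∧ x = y then 1 else 0

def wronMu {m : ℕ} [NeZero m] (x y : Fin m) : ℤ :=
  if x = 0 ∨ y = 0 then 1 else if x = y then -1 else 0

def Wa {n : ℕ} (m : Fin n → ℕ) [∀ i, NeZero (m i)] :
    Matrix (∀ i, Fin (m i)) (∀ i, Fin (m i)) ℤ :=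
  fun g h => ∏ i, (1 - (m i : ℤ) * wronOmega (g i) (h i))

def W0 {n : ℕ} (m : Fin n → ℕ) [∀ i, NeZero (m i)] :
    Matrix (∀ i, Fin (m i)) (∀ i, Fin (m i)) ℤ :=
  fun g h => ∏ i, wronMu (g i) (h i)

lemma wronMu_comm {m : ℕ} [NeZero m] (x y : Fin m) : wronMu x y = wronMu y x := by
  unfold wronMu
  by_cases h1 : x = 0 <;> by_cases h2 : y = 0 <;> by_cases h3 : x = y <;>
    simp_all [eq_comm]

lemma sum_wronMu {m : ℕ} [NeZero m] (y : Fin m) :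
    ∑ k : Fin m, wronMu k y = if y = 0 then (m : ℤ) else 0 := by
  by_cases hy : y = 0
  · simp [hy, wronMu]
  · have : ∀ k : Fin m, wronMu k y =
        (if k = 0 then 1 else 0) + (if k = y then -1 else 0) := by
      intro k
      by_cases h1 : k = 0
      · have h2 : k ≠ y := fun e => hy (e ▸ h1)
        simp [wronMu, h1, h2]
        exact fun e => hy e.symm
      · by_cases h2 : k = y <;> simp [wronMu, h1, h2, hy]
    simp [this, Finset.sum_add_distrib, Finset.sum_ite_eq', hy]

lemma sum_key {m : ℕ} [NeZero m] (x y : Fin m) :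
    ∑ k : Fin m, (1 - (m : ℤ) * wronOmega x k) * wronMu k y =
      if x = y then (m : ℤ) else 0 := by
  have expand : ∀ k : Fin m, (1 - (m : ℤ) * wronOmega x k) * wronMu k y =
      wronMu k y - (m : ℤ) * (if x ≠ 0 ∧ x = k then wronMu k y else 0) := by
    intro k
    by_cases h : x ≠ 0 ∧ x = k
    · rw [wronOmega, if_pos h, if_pos h]; ring
    · rw [wronOmega, if_neg h, if_neg h]; ring
  rw [Finset.sum_congr rfl fun k _ => expand k, Finset.sum_sub_distrib, sum_wronMu,
    ← Finset.mul_sum]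
  have : ∑ k : Fin m, (if x ≠ 0 ∧ x = k then wronMu k y else 0) =
      if x ≠ 0 then wronMu x y else 0 := by
    by_cases hx : x = 0 <;> simp [hx, Finset.sum_ite_eq]
  rw [this]
  by_cases hx : x = 0
  · by_cases hy : y = 0
    · simp [hx, hy, hx.trans hy.symm]
    · have hxy : x ≠ y := fun e => hy (e ▸ hx)
      simp [hx, hy, hxy, Ne.symm hy]
  · by_cases hy : y = 0
    · have hxy : x ≠ y := fun e => hx (e.trans hy)
      simp [hx, hy, hxy, wronMu]
    · by_cases hxy : x = y <;> simp [hx, hy, hxy, wronMu] <;> ring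

lemma sum_key' {m : ℕ} [NeZero m] (x y : Fin m) :
    ∑ k : Fin m, wronMu x k * (1 - (m : ℤ) * wronOmega k y) =
      if x = y then (m : ℤ) else 0 := by
  have expand : ∀ k : Fin m, wronMu x k * (1 - (m : ℤ) * wronOmega k y) =
      wronMu k x - (m : ℤ) * (if y ≠ 0 ∧ y = k then wronMu k x else 0) := by
    intro k
    rw [wronMu_comm]
    by_cases h : y ≠ 0 ∧ y = k
    · obtain ⟨h1, h2⟩ := h
      have hk : (k ≠ 0 ∧ k = y) := ⟨h2 ▸ h1, h2.symm⟩
      rw [wronOmega, if_pos hk, if_pos ⟨h1, h2⟩]; ring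
    · have hk : ¬ (k ≠ 0 ∧ k = y) := by
        intro ⟨a, b⟩; exact h ⟨b ▸ a, b.symm⟩
      rw [wronOmega, if_neg hk, if_neg h]; ring
  rw [Finset.sum_congr rfl fun k _ => expand k, Finset.sum_sub_distrib, sum_wronMu,
    ← Finset.mul_sum]
  have : ∑ k : Fin m, (if y ≠ 0 ∧ y = k then wronMu k x else 0) =
      if y ≠ 0 then wronMu y x else 0 := by
    by_cases hy : y = 0 <;> simp [hy, Finset.sum_ite_eq]
  rw [this]
  by_cases hx : x = 0
  · by_cases hy : y = 0
    · simp [hx, hy, hx.trans hy.symm]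
    · have hxy : x ≠ y := fun e => hy (e ▸ hx)
      simp [hx, hy, hxy, wronMu, Ne.symm hy]
  · by_cases hy : y = 0
    · have hxy : x ≠ y := fun e => hx (e.trans hy)
      simp [hx, hy, hxy, wronMu]
    · by_cases hxy : x = y <;>
        simp [hx, hy, hxy, eq_comm, wronMu, Ne.symm hx, Ne.symm hy] <;> ring

lemma prod_ite_eq_pi {n : ℕ} (m : Fin n → ℕ) [∀ i, NeZero (m i)]
    (g h : ∀ i, Fin (m i)) :
    ∏ i, (if g i = h i then (m i : ℤ) else 0) =
      if g = h then ((∏ i, m i : ℕ) : ℤ) else 0 := by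
  by_cases hgh : g = h
  · simp [hgh, Nat.cast_prod]
  · have : ∃ i, g i ≠ h i := by
      by_contra hc
      push_neg at hc
      exact hgh (funext hc)
    obtain ⟨i, hi⟩ := this
    rw [if_neg hgh]
    exact Finset.prod_eq_zero (Finset.mem_univ i) (by simp [hi])

theorem Wa_W0_scaled_inverse {n : ℕ} (m : Fin n → ℕ) [∀ i, NeZero (m i)] :
    Wa m * W0 m = ((∏ i, m i : ℕ) : ℤ) • (1 : Matrix (∀ i, Fin (m i)) (∀ i, Fin (m i)) ℤ) ∧
    W0 m * Wa m = ((∏ i, m i : ℕ) : ℤ) • (1 : Matrix (∀ i, Fin (m i)) (∀ i, Fin (m i)) ℤ) := by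
  constructor
  · ext g h
    rw [Matrix.mul_apply]
    simp only [Wa, W0, Matrix.smul_apply, Matrix.one_apply, smul_eq_mul]
    have key : ∀ k : ∀ i, Fin (m i),
        (∏ i, (1 - (m i : ℤ) * wronOmega (g i) (k i))) * ∏ i, wronMu (k i) (h i) =
        ∏ i, (1 - (m i : ℤ) * wronOmega (g i) (k i)) * wronMu (k i) (h i) := by
      intro k; rw [← Finset.prod_mul_distrib]
    rw [Finset.sum_congr rfl fun k _ => key k,
      ← Fintype.prod_sum (fun i (j : Fin (m i)) =>
        (1 - (m i : ℤ) * wronOmega (g i) j) * wronMu j (h i))]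
    rw [Finset.prod_congr rfl fun i _ => sum_key (g i) (h i), prod_ite_eq_pi]
    by_cases hgh : g = h <;> simp [hgh]
  · ext g h
    rw [Matrix.mul_apply]
    simp only [Wa, W0, Matrix.smul_apply, Matrix.one_apply, smul_eq_mul]
    have key : ∀ k : ∀ i, Fin (m i),
        (∏ i, wronMu (g i) (k i)) * ∏ i, (1 - (m i : ℤ) * wronOmega (k i) (h i)) =
        ∏ i, wronMu (g i) (k i) * (1 - (m i : ℤ) * wronOmega (k i) (h i)) := by
      intro k; rw [← Finset.prod_mul_distrib]
    rw [Finset.sum_congr rfl fun k _ => key k,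
      ← Fintype.prod_sum (fun i (j : Fin (m i)) =>
        wronMu (g i) j * (1 - (m i : ℤ) * wronOmega j (h i)))]
    rw [Finset.prod_congr rfl fun i _ => sum_key' (g i) (h i), prod_ite_eq_pi]
    by_cases hgh : g = h <;> simp [hgh]
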